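/- Let φ : ℝⁿ → ℝ be continuously differentiable and bounded from below, let a, b > 0, let (x^k) satisfy the sufficient-decrease condition (H1) and the relative-error condition (H2), let x̄ be an accumulation point of (x^k), and suppose φ satisfies the exponent PLK condition at x̄ with exponent q = 1/2 and some constant M > 0. Then (x^k) converges R-linearly to x̄: there exist C > 0 and ρ ∈ (0,1) such that ‖x^k − x̄‖ ≤ C·ρ^k for all k ∈ ℕ. -/

import Mathlib

open Filter Topology

private lemma sqrt_pow_aux (x : ℝ) (h : 0 ≤ x) (n : ℕ) :
    Real.sqrt (x ^ n) = Real.sqrt x ^ n := by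
  rw [show x ^ n = (Real.sqrt x ^ n) ^ 2 by
      rw [← pow_mul, mul_comm, pow_mul, Real.sq_sqrt h],
    Real.sqrt_sq (pow_nonneg (Real.sqrt_nonneg x) n)]

set_option maxHeartbeats 1000000 in
theorem iterate_Rlinear_q_half_H2
    (n : ℕ) (φ : EuclideanSpace ℝ (Fin n) → ℝ)
    (hφ : ContDiff ℝ 1 φ)
    (hbdd : ∃ m : ℝ, ∀ x, m ≤ φ x)
    (a b : ℝ) (ha : 0 < a) (hb : 0 < b)
    (x : ℕ → EuclideanSpace ℝ (Fin n))
    (hH1 : ∀ k : ℕ, φ (x (k + 1)) + a * ‖x (k + 1) - x k‖ ^ 2 ≤ φ (x k))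
    (hH2 : ∀ k : ℕ, ‖gradient φ (x (k + 1))‖ ≤ b * ‖x (k + 1) - x k‖)
    (xbar : EuclideanSpace ℝ (Fin n))
    (hacc : ∃ σ : ℕ → ℕ, StrictMono σ ∧
      Tendsto (fun j => x (σ j)) atTop (𝓝 xbar))
    (q : ℝ) (hq : q = 1/2)
    (M : ℝ) (hM : 0 < M)
    (hPLK : ∃ ε η : ℝ, 0 < ε ∧ 0 < η ∧
      ∀ y, ‖y - xbar‖ < ε → φ xbar < φ y → φ y < φ xbar + η →
        (1 / (M * (1 - q))) * (φ y - φ xbar) ^ q ≤ ‖gradient φ y‖) :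
    ∃ C > (0 : ℝ), ∃ ρ ∈ Set.Ioo (0 : ℝ) 1, ∀ k : ℕ,
      ‖x k - xbar‖ ≤ C * ρ ^ k := by
  obtain ⟨σ, hσ, hconv⟩ := hacc
  obtain ⟨ε, η, hε, hη, hKL⟩ := hPLK
  subst hq
  set r : ℕ → ℝ := fun k => φ (x k) - φ xbar with hrdef
  have hr : ∀ k, r k = φ (x k) - φ xbar := fun k => rfl
  have hstep : ∀ k, a * ‖x (k + 1) - x k‖ ^ 2 ≤ r k - r (k + 1) := by
    intro k; have := hH1 k; rw [hr, hr]; linarith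
  have hmono : ∀ k, φ (x (k + 1)) ≤ φ (x k) := by
    intro k; have := hH1 k
    nlinarith [mul_nonneg ha.le (sq_nonneg ‖x (k + 1) - x k‖)]
  have hanti : Antitone (fun k => φ (x k)) := antitone_nat_of_succ_le hmono
  have hφσ : Tendsto (fun j => φ (x (σ j))) atTop (𝓝 (φ xbar)) :=
    (hφ.continuous.tendsto xbar).comp hconv
  have hge : ∀ k, φ xbar ≤ φ (x k) := by
    intro k
    refine le_of_tendsto hφσ ?_
    filter_upwards [eventually_ge_atTop k] with j hj
    exact hanti (hj.trans (hσ.id_le j))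
  have hrnn : ∀ k, 0 ≤ r k := fun k => sub_nonneg.2 (hge k)
  have hranti : ∀ {k l : ℕ}, k ≤ l → r l ≤ r k :=
    fun {k l} h => sub_le_sub_right (hanti h) _
  -- constants
  set c : ℝ := M ^ 2 * b ^ 2 / (4 * a) with hc
  have hc0 : 0 < c := by positivity
  set θ : ℝ := c / (1 + c) with hθdef
  have hθ0 : 0 < θ := by positivity
  have hθ1 : θ < 1 := (div_lt_one (by linarith)).2 (by linarith)
  set ρ : ℝ := Real.sqrt θ with hρdef
  have hρ0 : 0 < ρ := Real.sqrt_pos.2 hθ0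
  have hρ1 : ρ < 1 := by
    rw [hρdef, show (1 : ℝ) = Real.sqrt 1 by simp]
    exact Real.sqrt_lt_sqrt hθ0.le hθ1
  -- step length bound
  have hΔ : ∀ k, ‖x (k + 1) - x k‖ ≤ Real.sqrt (r k) / Real.sqrt a := by
    intro k
    have h1 : ‖x (k + 1) - x k‖ ^ 2 ≤ r k / a := by
      rw [le_div_iff₀ ha]; nlinarith [hstep k, hrnn (k + 1)]
    have h2 := Real.sqrt_le_sqrt h1
    rwa [Real.sqrt_sq (norm_nonneg _), Real.sqrt_div (hrnn k)] at h2
  -- choose K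
  set δ : ℝ := (ε / 2 * (Real.sqrt a * (1 - ρ))) ^ 2 with hδdef
  have hδ0 : 0 < δ := by
    have h1ρ : (0:ℝ) < 1 - ρ := by linarith
    exact pow_pos (mul_pos (by linarith) (mul_pos (Real.sqrt_pos.2 ha) h1ρ)) 2
  have hrσ : Tendsto (fun j => r (σ j)) atTop (𝓝 0) := by
    have := hφσ.sub_const (φ xbar)
    simpa using this
  have hnσ : Tendsto (fun j => ‖x (σ j) - xbar‖) atTop (𝓝 0) := by
    have h0 : Tendsto (fun j => x (σ j) - xbar) atTop (𝓝 0) := by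
      simpa using hconv.sub_const xbar
    simpa using h0.norm
  have hev : ∀ᶠ j in atTop,
      ‖x (σ j) - xbar‖ < ε / 2 ∧ r (σ j) < η ∧ r (σ j) < δ :=
    (hnσ.eventually_lt_const (by linarith)).and
      ((hrσ.eventually_lt_const hη).and (hrσ.eventually_lt_const hδ0))
  obtain ⟨j0, hj0⟩ := hev.exists
  set K : ℕ := σ j0 with hK
  obtain ⟨hK1, hKη, hKδ⟩ := hj0
  set S : ℝ := Real.sqrt (r K) / Real.sqrt a with hS
  have hS0 : 0 ≤ S := by positivity
  have h1ρ : (0:ℝ) < 1 - ρ := by linarith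
  have hT0 : S * (1 - ρ)⁻¹ < ε / 2 := by
    have h1 : Real.sqrt (r K) < ε / 2 * (Real.sqrt a * (1 - ρ)) := by
      have h2 := Real.sqrt_lt_sqrt (hrnn K) hKδ
      rwa [hδdef, Real.sqrt_sq
        (mul_nonneg (by linarith) (mul_nonneg (Real.sqrt_nonneg a) h1ρ.le))] at h2
    have hsa : 0 < Real.sqrt a := Real.sqrt_pos.2 ha
    have heq : S * (1 - ρ)⁻¹ = Real.sqrt (r K) / (Real.sqrt a * (1 - ρ)) := by
      rw [hS]
      field_simp
    rw [heq, div_lt_iff₀ (mul_pos hsa h1ρ)]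
    exact h1
  have hgeom : ∀ m : ℕ, ∑ i ∈ Finset.range m, ρ ^ i ≤ (1 - ρ)⁻¹ := by
    intro m
    rw [← tsum_geometric_of_lt_one hρ0.le hρ1]
    exact Summable.sum_le_tsum _ (fun i _ => pow_nonneg hρ0.le i)
      (summable_geometric_of_lt_one hρ0.le hρ1)
  have hΔ' : ∀ i : ℕ, r (K + i) ≤ θ ^ i * r K →
      ‖x (K + i + 1) - x (K + i)‖ ≤ S * ρ ^ i := by
    intro i hi
    calc ‖x (K + i + 1) - x (K + i)‖ ≤ Real.sqrt (r (K + i)) / Real.sqrt a := hΔ (K + i)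
      _ ≤ Real.sqrt (θ ^ i * r K) / Real.sqrt a := by gcongr
      _ = S * ρ ^ i := by
          rw [Real.sqrt_mul (by positivity), sqrt_pow_aux θ hθ0.le, hS, hρdef]
          ring
  -- main induction
  have hmain : ∀ m : ℕ, ∀ i ≤ m, ‖x (K + i) - xbar‖ < ε ∧ r (K + i) ≤ θ ^ i * r K := by
    intro m
    induction m with
    | zero =>
      intro i hi
      interval_cases i
      exact ⟨by simpa using hK1.trans_le (by linarith), by simp⟩
    | succ m IH =>
      intro i hi
      rcases le_or_gt i m with h | h
      · exact IH i h
      have hieq : i = m + 1 := le_antisymm hi h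
      subst hieq
      have hball : ‖x (K + (m + 1)) - xbar‖ < ε := by
        have htel : dist (x K) (x (K + (m + 1))) ≤
            ∑ i ∈ Finset.range (m + 1), dist (x (K + i)) (x (K + i + 1)) := by
          simpa [← add_assoc] using dist_le_range_sum_dist (fun i => x (K + i)) (m + 1)
        have hsum : ∑ i ∈ Finset.range (m + 1), dist (x (K + i)) (x (K + i + 1)) ≤
            S * (1 - ρ)⁻¹ := by
          calc ∑ i ∈ Finset.range (m + 1), dist (x (K + i)) (x (K + i + 1))
              ≤ ∑ i ∈ Finset.range (m + 1), S * ρ ^ i := by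
                refine Finset.sum_le_sum fun i hi' => ?_
                rw [dist_eq_norm, norm_sub_rev]
                exact hΔ' i (IH i (Finset.mem_range_succ_iff.1 hi')).2
            _ = S * ∑ i ∈ Finset.range (m + 1), ρ ^ i := by rw [Finset.mul_sum]
            _ ≤ S * (1 - ρ)⁻¹ := mul_le_mul_of_nonneg_left (hgeom _) hS0
        have htri := dist_triangle (x (K + (m + 1))) (x K) xbar
        rw [dist_eq_norm, dist_eq_norm, dist_eq_norm] at htri
        have htel' : ‖x (K + (m + 1)) - x K‖ ≤
            ∑ i ∈ Finset.range (m + 1), dist (x (K + i)) (x (K + i + 1)) := by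
          rw [← dist_eq_norm, dist_comm]
          exact htel
        linarith [htel'.trans hsum]
      refine ⟨hball, ?_⟩
      rcases le_or_gt (r (K + (m + 1))) 0 with h0 | h0
      · exact h0.trans (mul_nonneg (pow_nonneg hθ0.le _) (hrnn K))
      have hlt : φ xbar < φ (x (K + (m + 1))) := by
        have := h0; rw [hr] at this; linarith
      have hub : φ (x (K + (m + 1))) < φ xbar + η := by
        have h1 : r (K + (m + 1)) ≤ r K := hranti (Nat.le_add_right K (m + 1))
        rw [hr] at h1; linarith
      have hKL2 := (hKL (x (K + (m + 1))) hball hlt hub).trans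
        (by simpa [show K + (m + 1) = K + m + 1 from rfl] using hH2 (K + m))
      rw [show (1 : ℝ) / (M * (1 - 1 / 2)) = 2 / M by field_simp; norm_num,
        ← Real.sqrt_eq_rpow] at hKL2
      -- hKL2 : 2/M * √(φ(x _) - φ xbar) ≤ b * ‖x (K+m+1) - x (K+m)‖
      set s : ℝ := r (K + (m + 1)) with hsdef
      have hs_eq : φ (x (K + (m + 1))) - φ xbar = s := (hr _).symm
      rw [hs_eq] at hKL2
      set d : ℝ := ‖x (K + m + 1) - x (K + m)‖ with hd
      have hdnn : 0 ≤ d := norm_nonneg _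
      have h3 : 2 * Real.sqrt s ≤ M * b * d := by
        have := mul_le_mul_of_nonneg_left hKL2 hM.le
        calc 2 * Real.sqrt s = M * (2 / M * Real.sqrt s) := by field_simp
          _ ≤ M * (b * d) := this
          _ = M * b * d := by ring
      have hsq : Real.sqrt s ^ 2 = s := Real.sq_sqrt h0.le
      have h4 : 4 * s ≤ M ^ 2 * b ^ 2 * d ^ 2 := by
        have h3sq := mul_self_le_mul_self
          (by positivity : (0:ℝ) ≤ 2 * Real.sqrt s) h3
        calc 4 * s = 2 * Real.sqrt s * (2 * Real.sqrt s) := by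
              linear_combination (-4 : ℝ) * hsq
          _ ≤ M * b * d * (M * b * d) := h3sq
          _ = M ^ 2 * b ^ 2 * d ^ 2 := by ring
      have hd2 : a * d ^ 2 ≤ r (K + m) - s := hstep (K + m)
      have h5 : s ≤ c * (r (K + m) - s) := by
        rw [hc, div_mul_eq_mul_div, le_div_iff₀ (by positivity)]
        linarith [mul_le_mul_of_nonneg_left hd2
          (by positivity : (0:ℝ) ≤ M ^ 2 * b ^ 2),
          mul_le_mul_of_nonneg_left h4 ha.le]
      have h6 : s ≤ θ * r (K + m) := by
        rw [hθdef, div_mul_eq_mul_div, le_div_iff₀ (by linarith)]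
        linarith
      calc s ≤ θ * r (K + m) := h6
        _ ≤ θ * (θ ^ m * r K) := mul_le_mul_of_nonneg_left (IH m le_rfl).2 hθ0.le
        _ = θ ^ (m + 1) * r K := by ring
  -- tail bound
  have hfin : ∀ k, K ≤ k → ‖x k - xbar‖ ≤ S * ρ ^ (k - K) * (1 - ρ)⁻¹ := by
    intro k hk
    have hTb : ∀ m, k ≤ m →
        ‖x k - xbar‖ ≤ S * ρ ^ (k - K) * (1 - ρ)⁻¹ + ‖x (σ m) - xbar‖ := by
      intro m hm
      have hkm : k ≤ σ m := hm.trans (hσ.id_le m)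
      have htel : dist (x k) (x (σ m)) ≤
          ∑ i ∈ Finset.range (σ m - k), dist (x (k + i)) (x (k + i + 1)) := by
        have := dist_le_range_sum_dist (fun i => x (k + i)) (σ m - k)
        simpa [Nat.add_sub_cancel' hkm, ← add_assoc] using this
      have hsum : ∑ i ∈ Finset.range (σ m - k), dist (x (k + i)) (x (k + i + 1)) ≤
          S * ρ ^ (k - K) * (1 - ρ)⁻¹ := by
        calc ∑ i ∈ Finset.range (σ m - k), dist (x (k + i)) (x (k + i + 1))
            ≤ ∑ i ∈ Finset.range (σ m - k), S * ρ ^ (k - K) * ρ ^ i := by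
              refine Finset.sum_le_sum fun i _ => ?_
              have h1 : r (K + (k - K + i)) ≤ θ ^ (k - K + i) * r K :=
                (hmain (k - K + i) (k - K + i) le_rfl).2
              have h2 := hΔ' (k - K + i) h1
              have hkKi : K + (k - K + i) = k + i := by omega
              rw [hkKi] at h2
              rw [dist_eq_norm, norm_sub_rev]
              calc ‖x (k + i + 1) - x (k + i)‖ ≤ S * ρ ^ (k - K + i) := h2
                _ = S * ρ ^ (k - K) * ρ ^ i := by rw [pow_add]; ring
          _ = S * ρ ^ (k - K) * ∑ i ∈ Finset.range (σ m - k), ρ ^ i := by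
              rw [← Finset.mul_sum]
          _ ≤ S * ρ ^ (k - K) * (1 - ρ)⁻¹ :=
              mul_le_mul_of_nonneg_left (hgeom _) (by positivity)
      have htri : dist (x k) xbar ≤ dist (x k) (x (σ m)) + dist (x (σ m)) xbar :=
        dist_triangle _ _ _
      rw [dist_eq_norm, dist_eq_norm (x (σ m))] at htri
      linarith [htel.trans hsum]
    have hlim : Tendsto (fun m => S * ρ ^ (k - K) * (1 - ρ)⁻¹ + ‖x (σ m) - xbar‖)
        atTop (𝓝 (S * ρ ^ (k - K) * (1 - ρ)⁻¹ + 0)) := tendsto_const_nhds.add hnσ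
    have hle : ‖x k - xbar‖ ≤ S * ρ ^ (k - K) * (1 - ρ)⁻¹ + 0 :=
      ge_of_tendsto hlim (by
        filter_upwards [eventually_ge_atTop k] with m hm
        exact hTb m hm)
    linarith
  -- assemble constants
  set B : ℝ := S * (1 - ρ)⁻¹ / ρ ^ K with hB
  have hBnn : 0 ≤ B := div_nonneg
    (mul_nonneg hS0 (inv_nonneg.2 h1ρ.le)) (pow_pos hρ0 K).le
  set N : ℝ := ∑ i ∈ Finset.range K, ‖x i - xbar‖ with hN
  have hNnn : 0 ≤ N := Finset.sum_nonneg fun i _ => norm_nonneg _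
  have hNK : 0 ≤ N / ρ ^ K := div_nonneg hNnn (pow_pos hρ0 K).le
  refine ⟨B + N / ρ ^ K + 1, by linarith, ρ, ⟨hρ0, hρ1⟩, ?_⟩
  intro k
  have hρk : 0 < ρ ^ k := pow_pos hρ0 k
  rcases le_or_gt K k with hk | hk
  · have h1 := hfin k hk
    have hpow : ρ ^ (k - K) * ρ ^ K = ρ ^ k := pow_sub_mul_pow ρ hk
    have h2 : S * ρ ^ (k - K) * (1 - ρ)⁻¹ = B * ρ ^ k := by
      rw [hB, ← hpow]
      field_simp [sub_ne_zero.2 hρ1.ne', pow_ne_zero K hρ0.ne']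
    rw [h2] at h1
    have hexp : (B + N / ρ ^ K + 1) * ρ ^ k
        = B * ρ ^ k + N / ρ ^ K * ρ ^ k + ρ ^ k := by ring
    have h3 : 0 ≤ N / ρ ^ K * ρ ^ k := mul_nonneg hNK hρk.le
    rw [hexp]
    linarith
  · have h1 : ‖x k - xbar‖ ≤ N :=
      Finset.single_le_sum (f := fun i => ‖x i - xbar‖)
        (fun i _ => norm_nonneg _) (Finset.mem_range.2 hk)
    have h2 : ρ ^ K ≤ ρ ^ k := pow_le_pow_of_le_one hρ0.le hρ1.le hk.le
    have h3 : N / ρ ^ K * ρ ^ K ≤ N / ρ ^ K * ρ ^ k :=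
      mul_le_mul_of_nonneg_left h2 (by positivity)
    have h4 : N / ρ ^ K * ρ ^ K = N := div_mul_cancel₀ N (pow_ne_zero K hρ0.ne')
    have h5 : 0 ≤ B * ρ ^ k := mul_nonneg hBnn hρk.le
    have hexp : (B + N / ρ ^ K + 1) * ρ ^ k
        = B * ρ ^ k + N / ρ ^ K * ρ ^ k + ρ ^ k := by ring
    rw [hexp]
    linarith
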